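/- Let R₀ be a commutative ring, m ≤ n positive integers, R = R₀[{A_{ij}}_{1≤i≤m, 1≤j≤n}], S = R[X₁, …, X_n], c₁, …, c_m ∈ R, and L_i = (∑_{j=1}^n A_{ij}·X_j) − c_i ∈ S. Then the images of L₁, …, L_m in the localization S[A₁₁⁻¹] (the localization of S at the powers of A₁₁) form a regular sequence: for each i = 1, …, m, the image of L_i in S[A₁₁⁻¹]/(L₁, …, L_{i−1}) is a non-zero-divisor. -/

import Mathlib

open MvPolynomial

namespace Stmt14Aux

/-- `x` is a non-zero-divisor modulo the ideal `J`. -/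
def NzdMod {P : Type*} [CommRing P] (J : Ideal P) (x : P) : Prop :=
  ∀ v, x * v ∈ J → v ∈ J

section Basic

variable {P : Type*} [CommRing P]

lemma nzdMod_one (J : Ideal P) : NzdMod J 1 := fun v hv => by simpa using hv

lemma NzdMod.congr {J : Ideal P} {x y : P} (hxy : x - y ∈ J) (hx : NzdMod J x) :
    NzdMod J y := by
  intro v hv
  refine hx v ?_
  have : x * v = (x - y) * v + y * v := by ring
  rw [this]
  exact Submodule.add_mem _ (Ideal.mul_mem_right _ _ hxy) hv

/-- swap lemma: if `x` is nzd mod `J` and `w` is nzd mod `J + (x)`,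
then `x` is nzd mod `J + (w)`. -/
lemma NzdMod.swap {J : Ideal P} {x w : P} (hx : NzdMod J x)
    (hw : NzdMod (J ⊔ Ideal.span {x}) w) : NzdMod (J ⊔ Ideal.span {w}) x := by
  intro u hu
  rcases Submodule.mem_sup.mp hu with ⟨j, hj, z, hz, hjz⟩
  rcases Ideal.mem_span_singleton'.mp hz with ⟨r, hrz⟩
  have hwr : w * r ∈ J ⊔ Ideal.span {x} := by
    have h : w * r = x * u - j := by linear_combination hjz + hrz
    rw [h]
    exact Submodule.sub_mem _ (Submodule.mem_sup_right (Ideal.mem_span_singleton'.mpr ⟨u, by ring⟩))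
      (Submodule.mem_sup_left hj)
  rcases Submodule.mem_sup.mp (hw r hwr) with ⟨j', hj', z', hz', hjz'⟩
  rcases Ideal.mem_span_singleton'.mp hz' with ⟨s, hsz⟩
  have hxu : x * (u - s * w) ∈ J := by
    have h : x * (u - s * w) = j + j' * w := by
      linear_combination -hjz - hrz - w * hjz' - w * hsz
    rw [h]
    exact Submodule.add_mem _ hj (Ideal.mul_mem_right _ _ hj')
  have h1 := hx _ hxu
  have h2 : u = (u - s * w) + s * w := by ring
  rw [h2]
  exact Submodule.add_mem _ (Submodule.mem_sup_left h1)
    (Submodule.mem_sup_right (Ideal.mem_span_singleton'.mpr ⟨s, rfl⟩))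

end Basic

section PolyStep

variable {B : Type*} [CommRing B]

/-- In `B[Y]`, the polynomial `C x * Y + C g` is a non-zero-divisor modulo `I.map C`
provided `x` is a non-zero-divisor modulo `I`. -/
lemma poly_step (I : Ideal B) (x g : B) (hx : ∀ b, x * b ∈ I → b ∈ I)
    (u : Polynomial B)
    (hu : (Polynomial.C x * Polynomial.X + Polynomial.C g) * u ∈ I.map (Polynomial.C (R := B))) :
    u ∈ I.map (Polynomial.C (R := B)) := by
  rw [Ideal.mem_map_C_iff] at hu ⊢
  -- downward induction on coefficients
  have key : ∀ j k, u.natDegree + 1 ≤ k + j → u.coeff k ∈ I := by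
    intro j
    induction j with
    | zero =>
      intro k hk
      rw [Polynomial.coeff_eq_zero_of_natDegree_lt (by omega)]
      exact I.zero_mem
    | succ j ih =>
      intro k hk
      by_cases h : u.natDegree + 1 ≤ k + j
      · exact ih k h
      · -- k + j + 1 = natDegree + 1
        have hcoeff := hu (k + 1)
        have hexp : ((Polynomial.C x * Polynomial.X + Polynomial.C g) * u).coeff (k + 1)
            = x * u.coeff k + g * u.coeff (k + 1) := by
          rw [add_mul, Polynomial.coeff_add, mul_assoc, Polynomial.coeff_C_mul,
            Polynomial.coeff_C_mul, Polynomial.coeff_X_mul]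
        rw [hexp] at hcoeff
        have h2 : u.coeff (k + 1) ∈ I := ih (k + 1) (by omega)
        have h3 : x * u.coeff k ∈ I := by
          have : x * u.coeff k = (x * u.coeff k + g * u.coeff (k + 1)) - g * u.coeff (k + 1) := by
            ring
          rw [this]
          exact I.sub_mem hcoeff (I.mul_mem_left _ h2)
        exact hx _ h3
  intro k
  exact key (u.natDegree + 1) k (by omega)

end PolyStep

section Transport

variable {P Q : Type*} [CommRing P] [CommRing Q]

lemma nzdMod_map_iff (e : P ≃+* Q) (J : Ideal P) (x : P) :
    NzdMod (J.map (e : P →+* Q)) (e x) ↔ NzdMod J x := by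
  have hmem : ∀ y : P, e y ∈ J.map (e : P →+* Q) ↔ y ∈ J := by
    intro y
    constructor
    · intro hy
      rcases (Ideal.mem_map_iff_of_surjective _ e.surjective).mp hy with ⟨z, hz, hze⟩
      rwa [← e.injective hze]
    · intro hy; exact Ideal.mem_map_of_mem _ hy
  constructor
  · intro h v hv
    have := h (e v) (by rw [← map_mul]; exact (hmem _).mpr hv)
    exact (hmem _).mp this
  · intro h v hv
    rcases e.surjective v with ⟨w, rfl⟩
    rw [← map_mul, hmem] at hv
    exact (hmem _).mpr (h w hv)

end Transport

section KeyNzd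

variable {R : Type*} [CommRing R] {σ : Type*} [DecidableEq σ]

lemma mem_map_equiv_iff' {P Q : Type*} [CommRing P] [CommRing Q] (E : P ≃+* Q) (J : Ideal P)
    (y : P) : E y ∈ J.map (E : P →+* Q) ↔ y ∈ J := by
  constructor
  · intro hy
    rcases (Ideal.mem_map_iff_of_surjective _ E.surjective).mp hy with ⟨z, hz, hze⟩
    rwa [← E.injective hze]
  · intro hy; exact Ideal.mem_map_of_mem _ hy

/-- The isomorphism singling out one variable of a multivariate polynomial ring. -/
noncomputable def varEquiv (s₀ : σ) :
    MvPolynomial σ R ≃ₐ[R] Polynomial (MvPolynomial {s // s ≠ s₀} R) :=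
  (renameEquiv R (Equiv.optionSubtypeNe s₀).symm).trans (optionEquivLeft R {s // s ≠ s₀})

lemma varEquiv_X_self (s₀ : σ) : varEquiv (R := R) s₀ (X s₀) = Polynomial.X := by
  simp only [varEquiv, AlgEquiv.trans_apply, renameEquiv_apply, rename_X,
    Equiv.optionSubtypeNe_symm_self, optionEquivLeft_X_none]

lemma varEquiv_C' (s₀ : σ) (f : MvPolynomial σ R) (hf : f ∈ supported R {s | s ≠ s₀}) :
    ∃ b, varEquiv (R := R) s₀ f = Polynomial.C b := by
  have hf' : f ∈ Algebra.adjoin R (X '' {s | s ≠ s₀} : Set (MvPolynomial σ R)) := hf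
  clear hf
  induction hf' using Algebra.adjoin_induction with
  | mem p hp =>
    rcases hp with ⟨s, hs, rfl⟩
    refine ⟨X ⟨s, hs⟩, ?_⟩
    simp only [varEquiv, AlgEquiv.trans_apply, renameEquiv_apply, rename_X,
      Equiv.optionSubtypeNe_symm_of_ne hs, optionEquivLeft_X_some]
  | algebraMap r =>
    refine ⟨C r, ?_⟩
    rw [AlgEquiv.commutes]
    simp [Polynomial.algebraMap_apply, MvPolynomial.algebraMap_eq]
  | add p q _ _ hp hq =>
    rcases hp with ⟨b, hb⟩; rcases hq with ⟨b', hb'⟩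
    exact ⟨b + b', by rw [map_add, hb, hb', map_add]⟩
  | mul p q _ _ hp hq =>
    rcases hp with ⟨b, hb⟩; rcases hq with ⟨b', hb'⟩
    exact ⟨b * b', by rw [map_mul, hb, hb', map_mul]⟩

lemma key_nzd (s₀ : σ) (G : Set (MvPolynomial σ R))
    (hG : ∀ g ∈ G, g ∈ supported R {s | s ≠ s₀})
    (x g : MvPolynomial σ R) (hxs : x ∈ supported R {s | s ≠ s₀})
    (hgs : g ∈ supported R {s | s ≠ s₀})
    (hx : NzdMod (Ideal.span G) x) :
    NzdMod (Ideal.span G) (x * X s₀ + g) := by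
  classical
  set E := (varEquiv (R := R) s₀).toRingEquiv with hE
  choose γ hγ using fun (p : G) => varEquiv_C' s₀ (p : MvPolynomial σ R) (hG p p.2)
  set I : Ideal (MvPolynomial {s // s ≠ s₀} R) := Ideal.span (Set.range γ) with hI
  have hmap : (Ideal.span G).map (E : _ →+* _) = I.map (Polynomial.C) := by
    rw [hI, Ideal.map_span, Ideal.map_span]
    congr 1
    ext q; constructor
    · rintro ⟨p, hp, rfl⟩
      exact ⟨γ ⟨p, hp⟩, ⟨⟨p, hp⟩, rfl⟩, (hγ ⟨p, hp⟩).symm⟩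
    · rintro ⟨b, ⟨p, rfl⟩, rfl⟩
      exact ⟨(p : MvPolynomial σ R), p.2, hγ p⟩
  obtain ⟨x', hx'⟩ := varEquiv_C' s₀ x hxs
  obtain ⟨g', hg'⟩ := varEquiv_C' s₀ g hgs
  have hxI : ∀ b, x' * b ∈ I → b ∈ I := by
    intro b hb
    have h2 : E (x * E.symm (Polynomial.C b)) ∈ (Ideal.span G).map (E : _ →+* _) := by
      rw [map_mul, RingEquiv.apply_symm_apply]
      have : (E x) * Polynomial.C b = Polynomial.C (x' * b) := by
        rw [show E x = varEquiv (R := R) s₀ x from rfl, hx', ← map_mul]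
      rw [this, hmap]
      exact Ideal.mem_map_of_mem _ hb
    have h3 : x * E.symm (Polynomial.C b) ∈ Ideal.span G :=
      (mem_map_equiv_iff' E _ _).mp h2
    have h4 := hx _ h3
    have h5 : Polynomial.C b ∈ I.map Polynomial.C := by
      rw [← hmap, show Polynomial.C b = E (E.symm (Polynomial.C b)) from
        (RingEquiv.apply_symm_apply E _).symm]
      exact Ideal.mem_map_of_mem _ h4
    simpa using (Ideal.mem_map_C_iff.mp h5) 0
  have main : NzdMod ((Ideal.span G).map (E : _ →+* _)) (E (x * X s₀ + g)) := by
    have hEe : E (x * X s₀ + g) = Polynomial.C x' * Polynomial.X + Polynomial.C g' := by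
      rw [show (E : MvPolynomial σ R → _) = (varEquiv (R := R) s₀ : MvPolynomial σ R → _)
        from rfl] at *
      rw [map_add, map_mul, hx', hg', varEquiv_X_self]
    rw [hEe, hmap]
    intro v hv
    exact poly_step I x' g' hxI v hv
  exact (nzdMod_map_iff E _ _).mp main

end KeyNzd

section Generic

variable {R : Type*} [CommRing R] {m n : ℕ}

/-- The `X`-variables. -/
noncomputable def Xv (l : Fin n) : MvPolynomial (Fin n ⊕ Fin m × Fin n) R := X (Sum.inl l)

/-- The generic linear forms `ℓ_j = ∑_l A_{jl} X_l`. -/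
noncomputable def lrow (j : Fin m) : MvPolynomial (Fin n ⊕ Fin m × Fin n) R :=
  ∑ l : Fin n, X (Sum.inr (j, l)) * X (Sum.inl l)

/-- The ideal generated by the rows in `D` and the variables in `Cq`. -/
noncomputable def Jdc (D : Finset (Fin m)) (Cq : Finset (Fin n)) :
    Ideal (MvPolynomial (Fin n ⊕ Fin m × Fin n) R) :=
  Ideal.span ((fun j => lrow (R := R) j) '' ↑D ∪ (fun l => Xv (R := R) l) '' ↑Cq)

lemma X_mem_supported' {σ : Type*} {s : Set σ} {i : σ} (h : i ∈ s) :
    X (R := R) i ∈ supported R s :=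
  Algebra.subset_adjoin ⟨i, h, rfl⟩

lemma Jdc_insert_row (D : Finset (Fin m)) (Cq : Finset (Fin n)) (j : Fin m) :
    Jdc (R := R) (insert j D) Cq = Jdc D Cq ⊔ Ideal.span {lrow j} := by
  rw [Jdc, Finset.coe_insert, Set.image_insert_eq, Set.insert_union, Ideal.span_insert, Jdc,
    sup_comm]

lemma Jdc_insert_col (D : Finset (Fin m)) (Cq : Finset (Fin n)) (l : Fin n) :
    Jdc (R := R) D (insert l Cq) = Jdc D Cq ⊔ Ideal.span {Xv l} := by
  rw [Jdc, Finset.coe_insert, Set.image_insert_eq, Set.union_insert, Ideal.span_insert, Jdc,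
    sup_comm]

lemma exists_not_mem_of_card_lt (Cq : Finset (Fin n)) (h : Cq.card < n) : ∃ p, p ∉ Cq := by
  by_contra hc
  push_neg at hc
  have : Cq = Finset.univ := Finset.eq_univ_iff_forall.mpr hc
  rw [this, Finset.card_univ, Fintype.card_fin] at h
  omega

lemma lrow_supported (j j₀ : Fin m) (p : Fin n) (hjj : j ≠ j₀) :
    lrow (R := R) j ∈ supported R {s | s ≠ Sum.inr (j₀, p)} := by
  apply Subalgebra.sum_mem
  intro l _
  apply Subalgebra.mul_mem
  · apply X_mem_supported'
    simp only [Set.mem_setOf_eq, ne_eq, Sum.inr.injEq, Prod.mk.injEq, not_and]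
    intro h; exact absurd h hjj
  · apply X_mem_supported'
    simp

/-- The `M2` step: if some `X_p` (with `p ∉ Cq`) is a non-zero-divisor mod `Jdc D Cq`,
then `ℓ_j` is a non-zero-divisor mod `Jdc D Cq` (for `j ∉ D`). -/
lemma M2aux (D : Finset (Fin m)) (Cq : Finset (Fin n)) (j : Fin m) (hj : j ∉ D) (p : Fin n)
    (hM1 : NzdMod (Jdc (R := R) D Cq) (Xv p)) : NzdMod (Jdc (R := R) D Cq) (lrow j) := by
  classical
  set s₀ : Fin n ⊕ Fin m × Fin n := Sum.inr (j, p) with hs₀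
  set g : MvPolynomial (Fin n ⊕ Fin m × Fin n) R :=
    ∑ l ∈ Finset.univ.erase p, X (Sum.inr (j, l)) * X (Sum.inl l) with hg
  have hGsupp : ∀ q ∈ ((fun j => lrow (R := R) j) '' ↑D ∪ (fun l => Xv (R := R) l) '' ↑Cq),
      q ∈ supported R {s | s ≠ s₀} := by
    rintro q (⟨k, hk, rfl⟩ | ⟨l, _, rfl⟩)
    · exact lrow_supported k j p (fun h => hj (h ▸ hk))
    · apply X_mem_supported'; simp [hs₀]
  have hxs : Xv (R := R) (m := m) p ∈ supported R {s | s ≠ s₀} := by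
    apply X_mem_supported'; simp [hs₀]
  have hgs : g ∈ supported R {s | s ≠ s₀} := by
    apply Subalgebra.sum_mem
    intro l hl
    apply Subalgebra.mul_mem
    · apply X_mem_supported'
      simp only [Finset.mem_erase] at hl
      simp [hs₀, hl.1]
    · apply X_mem_supported'; simp [hs₀]
  have key := key_nzd s₀ _ hGsupp (Xv p) g hxs hgs hM1
  have hrow : lrow (R := R) j = Xv p * X s₀ + g := by
    rw [lrow, hg, hs₀, Xv]
    rw [← Finset.add_sum_erase _ _ (Finset.mem_univ p)]
    ring
  rw [Jdc, hrow]
  exact key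

/-- `M1`: each remaining `X_l` is a non-zero-divisor modulo `Jdc D Cq`. -/
lemma M1 : ∀ (k : ℕ) (D : Finset (Fin m)) (Cq : Finset (Fin n)), D.card ≤ k →
    D.card + Cq.card < n → ∀ l ∉ Cq, NzdMod (Jdc (R := R) D Cq) (Xv l) := by
  classical
  have base : ∀ (Cq : Finset (Fin n)), ∀ l ∉ Cq, NzdMod (Jdc (R := R) (∅ : Finset (Fin m)) Cq) (Xv l) := by
    intro Cq l hl
    set s₀ : Fin n ⊕ Fin m × Fin n := Sum.inl l with hs₀
    have hGsupp : ∀ q ∈ ((fun j => lrow (R := R) j) '' (↑(∅ : Finset (Fin m)))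
        ∪ (fun l => Xv (R := R) l) '' ↑Cq), q ∈ supported R {s | s ≠ s₀} := by
      rintro q (⟨k, hk, rfl⟩ | ⟨l', hl', rfl⟩)
      · simp at hk
      · apply X_mem_supported'
        simp only [Set.mem_setOf_eq, ne_eq, Sum.inl.injEq, hs₀]
        intro h; exact hl (h ▸ hl')
    have key := key_nzd s₀ _ hGsupp 1 0 (Subalgebra.one_mem _) (Subalgebra.zero_mem _)
      (nzdMod_one _)
    rw [Jdc]
    have : Xv (R := R) (m := m) l = 1 * X s₀ + 0 := by rw [Xv, hs₀]; ring
    rw [this]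
    exact key
  intro k
  induction k with
  | zero =>
    intro D Cq hcard hlt l hl
    have hD : D = ∅ := Finset.card_eq_zero.mp (Nat.le_antisymm hcard (Nat.zero_le _))
    subst hD
    exact base Cq l hl
  | succ k ih =>
    intro D Cq hcard hlt l hl
    rcases D.eq_empty_or_nonempty with rfl | ⟨j, hj⟩
    · exact base Cq l hl
    · have hD' : D = insert j (D.erase j) := (Finset.insert_erase hj).symm
      have hcarde : (D.erase j).card = D.card - 1 := Finset.card_erase_of_mem hj
      have hDpos : 1 ≤ D.card := Finset.card_pos.mpr ⟨j, hj⟩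
      rw [hD', Jdc_insert_row]
      apply NzdMod.swap
      · exact ih (D.erase j) Cq (by omega) (by omega) l hl
      · rw [← Jdc_insert_col]
        have hcardi : (insert l Cq).card ≤ Cq.card + 1 := Finset.card_insert_le _ _
        obtain ⟨p, hp⟩ := exists_not_mem_of_card_lt (insert l Cq) (by omega)
        exact M2aux (D.erase j) (insert l Cq) j (fun h => absurd h (Finset.notMem_erase j D)) p
          (ih (D.erase j) (insert l Cq) (by omega) (by omega) p hp)

/-- `M2`: the next generic form is a non-zero-divisor modulo `Jdc D Cq`. -/
lemma M2 (D : Finset (Fin m)) (Cq : Finset (Fin n)) (hlt : D.card + Cq.card < n) (j : Fin m)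
    (hj : j ∉ D) : NzdMod (Jdc (R := R) D Cq) (lrow j) := by
  obtain ⟨p, hp⟩ := exists_not_mem_of_card_lt Cq (by omega)
  exact M2aux D Cq j hj p (M1 D.card D Cq le_rfl hlt p hp)

end Generic

section Weighted

variable {R : Type*} [CommRing R] {σ : Type*} (wt : σ → ℕ)

lemma comp_mul_hom₁ (d e : ℕ) (p h : MvPolynomial σ R) (hh : IsWeightedHomogeneous wt h e) :
    weightedHomogeneousComponent wt (d + e) (p * h) =
      weightedHomogeneousComponent wt d p * h := by
  classical
  ext μ
  rw [coeff_weightedHomogeneousComponent, MvPolynomial.coeff_mul, MvPolynomial.coeff_mul]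
  by_cases hμ : Finsupp.weight wt μ = d + e
  · rw [if_pos hμ]
    apply Finset.sum_congr rfl
    intro x hx
    by_cases hz : MvPolynomial.coeff x.2 h = 0
    · rw [hz, mul_zero, mul_zero]
    · have hw2 : Finsupp.weight wt x.2 = e := hh hz
      have hsum : x.1 + x.2 = μ := Finset.HasAntidiagonal.mem_antidiagonal.mp hx
      have hadd : (Finsupp.weight wt x.1 : ℕ) + Finsupp.weight wt x.2 = d + e := by
        rw [← map_add, hsum, hμ]
      have hx1 : (Finsupp.weight wt x.1 : ℕ) = d := by omega
      rw [coeff_weightedHomogeneousComponent, if_pos hx1]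
  · rw [if_neg hμ]
    symm
    apply Finset.sum_eq_zero
    intro x hx
    by_cases hz : MvPolynomial.coeff x.2 h = 0
    · rw [hz, mul_zero]
    · have hw2 : Finsupp.weight wt x.2 = e := hh hz
      have hsum : x.1 + x.2 = μ := Finset.HasAntidiagonal.mem_antidiagonal.mp hx
      rw [coeff_weightedHomogeneousComponent, if_neg, zero_mul]
      intro hx1
      apply hμ
      rw [← hsum, map_add, hx1, hw2]
  
lemma comp_mul_hom₀ (d e : ℕ) (hde : d < e) (p h : MvPolynomial σ R)
    (hh : IsWeightedHomogeneous wt h e) :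
    weightedHomogeneousComponent wt d (p * h) = 0 := by
  classical
  ext μ
  rw [coeff_weightedHomogeneousComponent, MvPolynomial.coeff_zero]
  by_cases hμ : Finsupp.weight wt μ = d
  · rw [if_pos hμ, MvPolynomial.coeff_mul]
    apply Finset.sum_eq_zero
    intro x hx
    by_cases hz : MvPolynomial.coeff x.2 h = 0
    · rw [hz, mul_zero]
    · exfalso
      have hw2 : Finsupp.weight wt x.2 = e := hh hz
      have hsum : x.1 + x.2 = μ := Finset.HasAntidiagonal.mem_antidiagonal.mp hx
      have : (Finsupp.weight wt x.1 : ℕ) + e = d := by rw [← hw2, ← map_add, hsum, hμ]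
      omega
  · rw [if_neg hμ]

/-- All weighted homogeneous components above degree `d` vanish. -/
def DegLE (d : ℕ) (p : MvPolynomial σ R) : Prop :=
  ∀ e, d < e → weightedHomogeneousComponent wt e p = 0

variable {wt}

lemma degLE_exists (p : MvPolynomial σ R) : ∃ d, DegLE wt d p :=
  ⟨weightedTotalDegree wt p, fun _ he => weightedHomogeneousComponent_eq_zero _ _ he⟩

lemma DegLE.mono {d d' : ℕ} (hdd : d ≤ d') {p : MvPolynomial σ R} (hp : DegLE wt d p) :
    DegLE wt d' p := fun e he => hp e (by omega)

lemma DegLE.sub {d : ℕ} {p q : MvPolynomial σ R} (hp : DegLE wt d p) (hq : DegLE wt d q) :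
    DegLE wt d (p - q) := fun e he => by rw [map_sub, hp e he, hq e he, sub_zero]

lemma degLE_of_homog {d t : ℕ} {p : MvPolynomial σ R} (hp : IsWeightedHomogeneous wt p t)
    (htd : t ≤ d) : DegLE wt d p := fun e he =>
  IsWeightedHomogeneous.weightedHomogeneousComponent_ne _ hp (by omega)

lemma degLE_sum {d : ℕ} {α : Type*} (s : Finset α) (f : α → MvPolynomial σ R)
    (hf : ∀ a ∈ s, DegLE wt d (f a)) : DegLE wt d (∑ a ∈ s, f a) := fun e he => by
  rw [map_sum, Finset.sum_eq_zero]
  intro a ha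
  exact hf a ha e he

lemma degLE_zero_eq {u : MvPolynomial σ R} (hu : DegLE wt 0 u) :
    u = weightedHomogeneousComponent wt 0 u := by
  conv_lhs => rw [← sum_weightedHomogeneousComponent wt u]
  exact finsum_eq_single _ 0 (fun e he => hu e (by omega))

end Weighted

section Koszul

variable {P : Type*} [CommRing P]

lemma mem_span_image_Iio_iff (g : ℕ → P) (r : ℕ) (x : P) :
    x ∈ Ideal.span (g '' Set.Iio r) ↔ ∃ t : ℕ → P, x = ∑ k ∈ Finset.range r, t k * g k := by
  classical
  constructor
  · intro hx
    induction hx using Submodule.span_induction with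
    | mem y hy =>
      rcases hy with ⟨k, hk, rfl⟩
      refine ⟨fun k' => if k' = k then 1 else 0, ?_⟩
      rw [Finset.sum_eq_single k]
      · simp
      · intro b _ hb; simp [hb]
      · intro hk'; exact absurd (Finset.mem_range.mpr hk) hk'
    | zero => exact ⟨0, by simp⟩
    | add a b _ _ iha ihb =>
      obtain ⟨t, rfl⟩ := iha
      obtain ⟨t', rfl⟩ := ihb
      exact ⟨t + t', by rw [← Finset.sum_add_distrib]; simp [add_mul]⟩
    | smul r a _ ih =>
      obtain ⟨t, rfl⟩ := ih
      refine ⟨fun k => r * t k, ?_⟩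
      rw [smul_eq_mul, Finset.mul_sum]
      exact Finset.sum_congr rfl (fun k _ => by ring)
  · rintro ⟨t, rfl⟩
    apply Ideal.sum_mem
    intro k hk
    exact Ideal.mul_mem_left _ _ (Ideal.subset_span ⟨k, Finset.mem_range.mp hk, rfl⟩)

lemma antisym_sum (h : ℕ → ℕ → P) (f : ℕ → P)
    (hanti : ∀ j k, h j k = - h k j) (hdiag : ∀ j, h j j = 0) (s : Finset ℕ) :
    ∑ j ∈ s, ∑ k ∈ s, h j k * (f k * f j) = 0 := by
  classical
  rw [← Finset.sum_product']
  apply Finset.sum_involution (fun p _ => (p.2, p.1))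
  · intro ⟨j, k⟩ hjk
    simp only
    rw [hanti j k]
    ring
  · intro ⟨j, k⟩ _ hne
    simp only [ne_eq, Prod.mk.injEq, not_and]
    intro hkj hjk
    apply hne
    subst hkj
    rw [hdiag, zero_mul]
  · intro ⟨j, k⟩ hjk
    simp only [Finset.mem_product] at hjk ⊢
    exact ⟨hjk.2, hjk.1⟩
  · intro ⟨j, k⟩ _; rfl

lemma koszul_syzygy (g : ℕ → P) (i : ℕ)
    (REG : ∀ r < i, NzdMod (Ideal.span (g '' Set.Iio r)) (g r)) :
    ∀ v : ℕ → P, ∑ j ∈ Finset.range i, v j * g j = 0 →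
    ∃ h : ℕ → ℕ → P, (∀ j k, h j k = - h k j) ∧ (∀ j, h j j = 0) ∧
      ∀ j < i, v j = ∑ k ∈ Finset.range i, h j k * g k := by
  classical
  induction i with
  | zero =>
    intro v _
    exact ⟨0, by simp, by simp, fun j hj => absurd hj (Nat.not_lt_zero j)⟩
  | succ i ih =>
    intro v hv
    rw [Finset.sum_range_succ] at hv
    -- v i * g i ∈ span (g '' Iio i)
    have hvi : g i * v i ∈ Ideal.span (g '' Set.Iio i) := by
      have : g i * v i = - ∑ j ∈ Finset.range i, v j * g j := by
        rw [mul_comm]; linear_combination hv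
      rw [this]
      apply Submodule.neg_mem
      apply Ideal.sum_mem
      intro k hk
      exact Ideal.mul_mem_left _ _ (Ideal.subset_span ⟨k, Finset.mem_range.mp hk, rfl⟩)
    have hmem := REG i (Nat.lt_succ_self i) _ hvi
    obtain ⟨t, ht⟩ := (mem_span_image_Iio_iff g i _).mp hmem
    -- new relation for v' j = v j + t j * g i
    have hrel : ∑ j ∈ Finset.range i, (v j + t j * g i) * g j = 0 := by
      have expand : ∑ j ∈ Finset.range i, (v j + t j * g i) * g j
          = (∑ j ∈ Finset.range i, v j * g j) + (∑ j ∈ Finset.range i, t j * g j) * g i := by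
        rw [Finset.sum_mul, ← Finset.sum_add_distrib]
        apply Finset.sum_congr rfl
        intro j _; ring
      rw [expand, ← ht]
      linear_combination hv
    obtain ⟨h', hanti', hdiag', hrep'⟩ := ih (fun r hr => REG r (Nat.lt_succ_of_lt hr)) _ hrel
    -- define h
    set H : ℕ → ℕ → P := fun j k =>
      if j < i ∧ k < i then h' j k
      else if j < i ∧ k = i then - t j
      else if j = i ∧ k < i then t k
      else 0 with hH
    refine ⟨H, ?_, ?_, ?_⟩
    · intro j k
      simp only [hH]
      split_ifs <;> first
        | omega
        | exact hanti' j k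
        | ring
    · intro j
      simp only [hH]
      split_ifs <;> first
        | omega
        | exact hdiag' j
        | ring
    · intro j hj
      rw [Finset.sum_range_succ]
      rcases Nat.lt_or_ge j i with hji | hji
      · have h1 : ∀ k ∈ Finset.range i, H j k * g k = h' j k * g k := by
          intro k hk
          simp only [Finset.mem_range] at hk
          simp only [hH]
          rw [if_pos ⟨hji, hk⟩]
        have h2 : H j i * g i = - t j * g i := by
          simp only [hH]
          rw [if_neg (by omega), if_pos (by simp [hji])]
        rw [Finset.sum_congr rfl h1, h2]
        linear_combination hrep' j hji
      · obtain rfl : j = i := by omega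
        have h1 : ∀ k ∈ Finset.range j, H j k * g k = t k * g k := by
          intro k hk
          simp only [Finset.mem_range] at hk
          simp only [hH]
          rw [if_neg (by omega), if_neg (by omega), if_pos (by simp [hk])]
        have h2 : H j j * g j = 0 := by
          simp only [hH]
          rw [if_neg (by omega), if_neg (by omega), if_neg (by omega), zero_mul]
        rw [Finset.sum_congr rfl h1, h2, add_zero]
        exact ht

end Koszul

section Deform

variable {R : Type*} [CommRing R] {σ : Type*} {wt : σ → ℕ}

lemma comp_mul_l' (s t : ℕ) (ht : t = s + 1) (p h : MvPolynomial σ R)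
    (hh : IsWeightedHomogeneous wt h 1) :
    weightedHomogeneousComponent wt t (p * h) = weightedHomogeneousComponent wt s p * h := by
  subst ht; exact comp_mul_hom₁ wt s 1 p h hh

lemma comp_mul_c' (t : ℕ) (p h : MvPolynomial σ R) (hh : IsWeightedHomogeneous wt h 0) :
    weightedHomogeneousComponent wt t (p * h) = weightedHomogeneousComponent wt t p * h := by
  simpa using comp_mul_hom₁ wt t 0 p h hh

lemma comp_zero_mul_l' (p h : MvPolynomial σ R) (hh : IsWeightedHomogeneous wt h 1) :
    weightedHomogeneousComponent wt 0 (p * h) = 0 := comp_mul_hom₀ wt 0 1 (by omega) p h hh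

lemma comp_of_ne {t s : ℕ} {p : MvPolynomial σ R} (hp : IsWeightedHomogeneous wt p s)
    (hne : t ≠ s) : weightedHomogeneousComponent wt t p = 0 :=
  IsWeightedHomogeneous.weightedHomogeneousComponent_ne _ hp hne

lemma comp_of_same {s : ℕ} {p : MvPolynomial σ R} (hp : IsWeightedHomogeneous wt p s) :
    weightedHomogeneousComponent wt s p = p :=
  IsWeightedHomogeneous.weightedHomogeneousComponent_same hp

/-- The main deformation induction. -/
lemma def_ind (ℓf cf : ℕ → MvPolynomial σ R) (i : ℕ)
    (hℓ : ∀ j ≤ i, IsWeightedHomogeneous wt (ℓf j) 1)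
    (hc : ∀ j ≤ i, IsWeightedHomogeneous wt (cf j) 0)
    (REG : ∀ r ≤ i, NzdMod (Ideal.span (ℓf '' Set.Iio r)) (ℓf r)) :
    ∀ d e (u : MvPolynomial σ R) (v : ℕ → MvPolynomial σ R), DegLE wt d u →
      (∀ j < i, DegLE wt e (v j)) →
      u * (ℓf i - cf i) = ∑ j ∈ Finset.range i, v j * (ℓf j - cf j) →
      u ∈ Ideal.span ((fun j => ℓf j - cf j) '' Set.Iio i) := by
  intro d
  induction d using Nat.strong_induction_on with
  | _ d IHd =>
  intro e
  induction e using Nat.strong_induction_on with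
  | _ e IHe =>
  intro u v hu hv hrel
  rcases Nat.lt_or_ge d e with hde | hde
  · -- Koszul case: reduce the degree bound on the coefficients `v`
    have he1 : 1 ≤ e := by omega
    have hE : e - 1 + 1 = e := by omega
    have hS0 : ∑ j ∈ Finset.range i, weightedHomogeneousComponent wt e (v j) * ℓf j = 0 := by
      have h1 := congrArg (weightedHomogeneousComponent wt (e + 1)) hrel
      rw [map_sum] at h1
      have hL : weightedHomogeneousComponent wt (e + 1) (u * (ℓf i - cf i)) = 0 := by
        rw [mul_sub, map_sub, comp_mul_l' e (e + 1) rfl u (ℓf i) (hℓ i le_rfl),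
          comp_mul_c' (e + 1) u (cf i) (hc i le_rfl), hu e (by omega), hu (e + 1) (by omega),
          zero_mul, zero_mul, sub_zero]
      rw [hL] at h1
      have h2 : ∀ j ∈ Finset.range i, weightedHomogeneousComponent wt (e + 1) (v j * (ℓf j - cf j))
          = weightedHomogeneousComponent wt e (v j) * ℓf j := by
        intro j hj
        have hj' : j < i := Finset.mem_range.mp hj
        rw [mul_sub, map_sub, comp_mul_l' e (e + 1) rfl (v j) (ℓf j) (hℓ j (by omega)),
          comp_mul_c' (e + 1) (v j) (cf j) (hc j (by omega)), hv j hj' (e + 1) (by omega),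
          zero_mul, sub_zero]
      rw [Finset.sum_congr rfl h2] at h1
      exact h1.symm
    obtain ⟨h', hanti, hdiag, hrep⟩ := koszul_syzygy ℓf i (fun r hr => REG r (le_of_lt hr)) _ hS0
    set h2 : ℕ → ℕ → MvPolynomial σ R :=
      fun j k => weightedHomogeneousComponent wt (e - 1) (h' j k) with hh2
    have hanti2 : ∀ j k, h2 j k = - h2 k j := by
      intro j k; simp only [hh2]; rw [hanti j k, map_neg]
    have hdiag2 : ∀ j, h2 j j = 0 := by
      intro j; simp only [hh2]; rw [hdiag j, map_zero]
    have hh2hom : ∀ j k, IsWeightedHomogeneous wt (h2 j k) (e - 1) := by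
      intro j k; simp only [hh2]; exact weightedHomogeneousComponent_isWeightedHomogeneous _ _
    have hrep2 : ∀ j < i, weightedHomogeneousComponent wt e (v j)
        = ∑ k ∈ Finset.range i, h2 j k * ℓf k := by
      intro j hj
      have h3 := congrArg (weightedHomogeneousComponent wt e) (hrep j hj)
      rw [comp_of_same (weightedHomogeneousComponent_isWeightedHomogeneous _ _), map_sum] at h3
      have hterm : ∀ k ∈ Finset.range i, weightedHomogeneousComponent wt e (h' j k * ℓf k)
          = h2 j k * ℓf k := by
        intro k hk
        have hki : k < i := Finset.mem_range.mp hk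
        exact comp_mul_l' (e - 1) e (by omega) _ _ (hℓ k (by omega))
      rw [Finset.sum_congr rfl hterm] at h3
      exact h3
    set v2 : ℕ → MvPolynomial σ R :=
      fun j => v j - ∑ k ∈ Finset.range i, h2 j k * (ℓf k - cf k) with hv2
    have hrel2 : u * (ℓf i - cf i) = ∑ j ∈ Finset.range i, v2 j * (ℓf j - cf j) := by
      have expand : ∑ j ∈ Finset.range i, v2 j * (ℓf j - cf j)
          = ∑ j ∈ Finset.range i, v j * (ℓf j - cf j)
            - ∑ j ∈ Finset.range i, ∑ k ∈ Finset.range i,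
                h2 j k * ((fun r => ℓf r - cf r) k * (fun r => ℓf r - cf r) j) := by
        rw [← Finset.sum_sub_distrib]
        apply Finset.sum_congr rfl
        intro j _
        simp only [hv2]
        rw [sub_mul, Finset.sum_mul]
        congr 1
        exact Finset.sum_congr rfl (fun k _ => by ring)
      rw [expand, antisym_sum h2 (fun r => ℓf r - cf r) hanti2 hdiag2, sub_zero, hrel]
    have hv2le : ∀ j < i, DegLE wt (e - 1) (v2 j) := by
      intro j hj t ht
      simp only [hv2]
      rw [map_sub, map_sum]
      rcases Nat.lt_or_ge e t with h | h
      · rw [hv j hj t (by omega), Finset.sum_eq_zero, sub_zero]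
        intro k hk
        have hki : k < i := Finset.mem_range.mp hk
        rw [mul_sub, map_sub, comp_of_ne ((hh2hom j k).mul (hℓ k (by omega))) (by omega),
          comp_of_ne ((hh2hom j k).mul (hc k (by omega))) (by omega), sub_zero]
      · obtain rfl : t = e := by omega
        have hterm2 : ∀ k ∈ Finset.range i, weightedHomogeneousComponent wt t
            (h2 j k * (ℓf k - cf k)) = h2 j k * ℓf k := by
          intro k hk
          have hki : k < i := Finset.mem_range.mp hk
          rw [mul_sub, map_sub, comp_of_ne ((hh2hom j k).mul (hc k (by omega))) (by omega),
            sub_zero, comp_of_same (hE ▸ (hh2hom j k).mul (hℓ k (by omega)))]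
        rw [Finset.sum_congr rfl hterm2, ← hrep2 j hj, sub_self]
    exact IHe (e - 1) (by omega) u v2 hu hv2le hrel2
  · -- main reduction case: e ≤ d
    rcases Nat.eq_zero_or_pos d with rfl | hd0
    · -- base case d = 0 (and e = 0)
      have he0 : e = 0 := by omega
      subst he0
      have h1 := congrArg (weightedHomogeneousComponent wt 1) hrel
      rw [map_sum] at h1
      have hL : weightedHomogeneousComponent wt 1 (u * (ℓf i - cf i)) = u * ℓf i := by
        rw [mul_sub, map_sub, comp_mul_l' 0 1 rfl u (ℓf i) (hℓ i le_rfl),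
          comp_mul_c' 1 u (cf i) (hc i le_rfl), hu 1 (by omega), zero_mul, sub_zero,
          ← degLE_zero_eq hu]
      rw [hL] at h1
      have h2 : ∀ j ∈ Finset.range i, weightedHomogeneousComponent wt 1 (v j * (ℓf j - cf j))
          = weightedHomogeneousComponent wt 0 (v j) * ℓf j := by
        intro j hj
        have hj' : j < i := Finset.mem_range.mp hj
        rw [mul_sub, map_sub, comp_mul_l' 0 1 rfl (v j) (ℓf j) (hℓ j (by omega)),
          comp_mul_c' 1 (v j) (cf j) (hc j (by omega)), hv j hj' 1 (by omega), zero_mul, sub_zero]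
      rw [Finset.sum_congr rfl h2] at h1
      have humem : ℓf i * u ∈ Ideal.span (ℓf '' Set.Iio i) := by
        rw [mul_comm, h1]
        apply Ideal.sum_mem
        intro k hk
        exact Ideal.mul_mem_left _ _ (Ideal.subset_span ⟨k, Finset.mem_range.mp hk, rfl⟩)
      have humem2 := REG i le_rfl u humem
      obtain ⟨t, ht⟩ := (mem_span_image_Iio_iff ℓf i u).mp humem2
      have hu0 : u = 0 := by
        have h3 := congrArg (weightedHomogeneousComponent wt 0) ht
        rw [← degLE_zero_eq hu, map_sum] at h3
        rw [h3, Finset.sum_eq_zero]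
        intro k hk
        exact comp_zero_mul_l' _ _ (hℓ k (le_of_lt (lt_of_lt_of_le (Finset.mem_range.mp hk) le_rfl)))
      rw [hu0]
      exact Ideal.zero_mem _
    · -- d ≥ 1 : reduce the degree bound on u
      have hD : d - 1 + 1 = d := by omega
      have h1 := congrArg (weightedHomogeneousComponent wt (d + 1)) hrel
      rw [map_sum] at h1
      have hL : weightedHomogeneousComponent wt (d + 1) (u * (ℓf i - cf i))
          = weightedHomogeneousComponent wt d u * ℓf i := by
        rw [mul_sub, map_sub, comp_mul_l' d (d + 1) rfl u (ℓf i) (hℓ i le_rfl),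
          comp_mul_c' (d + 1) u (cf i) (hc i le_rfl), hu (d + 1) (by omega), zero_mul, sub_zero]
      rw [hL] at h1
      have h2 : ∀ j ∈ Finset.range i, weightedHomogeneousComponent wt (d + 1) (v j * (ℓf j - cf j))
          = weightedHomogeneousComponent wt d (v j) * ℓf j := by
        intro j hj
        have hj' : j < i := Finset.mem_range.mp hj
        rw [mul_sub, map_sub, comp_mul_l' d (d + 1) rfl (v j) (ℓf j) (hℓ j (by omega)),
          comp_mul_c' (d + 1) (v j) (cf j) (hc j (by omega)), hv j hj' (d + 1) (by omega),
          zero_mul, sub_zero]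
      rw [Finset.sum_congr rfl h2] at h1
      have humem : ℓf i * weightedHomogeneousComponent wt d u ∈ Ideal.span (ℓf '' Set.Iio i) := by
        rw [mul_comm, h1]
        apply Ideal.sum_mem
        intro k hk
        exact Ideal.mul_mem_left _ _ (Ideal.subset_span ⟨k, Finset.mem_range.mp hk, rfl⟩)
      have humem2 := REG i le_rfl _ humem
      obtain ⟨t, ht⟩ := (mem_span_image_Iio_iff ℓf i _).mp humem2
      set w : ℕ → MvPolynomial σ R := fun k => weightedHomogeneousComponent wt (d - 1) (t k)
        with hwdef
      have hwhom : ∀ k, IsWeightedHomogeneous wt (w k) (d - 1) := by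
        intro k; simp only [hwdef]; exact weightedHomogeneousComponent_isWeightedHomogeneous _ _
      have hw : weightedHomogeneousComponent wt d u = ∑ k ∈ Finset.range i, w k * ℓf k := by
        have h3 := congrArg (weightedHomogeneousComponent wt d) ht
        rw [comp_of_same (weightedHomogeneousComponent_isWeightedHomogeneous _ _), map_sum] at h3
        have hterm : ∀ k ∈ Finset.range i, weightedHomogeneousComponent wt d (t k * ℓf k)
            = w k * ℓf k := by
          intro k hk
          exact comp_mul_l' (d - 1) d (by omega) _ _ (hℓ k (by
            have := Finset.mem_range.mp hk; omega))
        rw [Finset.sum_congr rfl hterm] at h3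
        exact h3
      set u2 : MvPolynomial σ R := u - ∑ k ∈ Finset.range i, w k * (ℓf k - cf k) with hu2def
      have hu2le : DegLE wt (d - 1) u2 := by
        intro s hs
        simp only [hu2def]
        rw [map_sub, map_sum]
        rcases Nat.lt_or_ge d s with h | h
        · rw [hu s (by omega), Finset.sum_eq_zero, sub_zero]
          intro k hk
          have hki : k < i := Finset.mem_range.mp hk
          rw [mul_sub, map_sub, comp_of_ne ((hwhom k).mul (hℓ k (by omega))) (by omega),
            comp_of_ne ((hwhom k).mul (hc k (by omega))) (by omega), sub_zero]
        · obtain rfl : s = d := by omega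
          have hterm2 : ∀ k ∈ Finset.range i, weightedHomogeneousComponent wt s
              (w k * (ℓf k - cf k)) = w k * ℓf k := by
            intro k hk
            have hki : k < i := Finset.mem_range.mp hk
            rw [mul_sub, map_sub, comp_of_ne ((hwhom k).mul (hc k (by omega))) (by omega),
              sub_zero, comp_of_same (hD ▸ (hwhom k).mul (hℓ k (by omega)))]
          rw [Finset.sum_congr rfl hterm2, ← hw, sub_self]
      have hrel2 : u2 * (ℓf i - cf i)
          = ∑ j ∈ Finset.range i, (v j - w j * (ℓf i - cf i)) * (ℓf j - cf j) := by
        simp only [hu2def]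
        rw [sub_mul, hrel, Finset.sum_mul, ← Finset.sum_sub_distrib]
        exact Finset.sum_congr rfl (fun j _ => by ring)
      have hv2le : ∀ j < i, DegLE wt d (v j - w j * (ℓf i - cf i)) := by
        intro j hj s hs
        rw [map_sub, hv j hj s (by omega), mul_sub, map_sub,
          comp_of_ne ((hwhom j).mul (hℓ i le_rfl)) (by omega),
          comp_of_ne ((hwhom j).mul (hc i le_rfl)) (by omega)]
        ring
      have hmem := IHd (d - 1) (by omega) d u2 _ hu2le hv2le hrel2
      have hid : u = u2 + ∑ k ∈ Finset.range i, w k * (ℓf k - cf k) := by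
        simp only [hu2def]; ring
      rw [hid]
      apply Ideal.add_mem _ hmem
      apply Ideal.sum_mem
      intro k hk
      exact Ideal.mul_mem_left _ _ (Ideal.subset_span ⟨k, Finset.mem_range.mp hk, rfl⟩)

/-- Deformation: if the homogeneous leading forms `ℓf` form a regular sequence, the
inhomogeneous `ℓf j - cf j` are "regular" at stage `i`. -/
lemma def_main (ℓf cf : ℕ → MvPolynomial σ R) (i : ℕ)
    (hℓ : ∀ j ≤ i, IsWeightedHomogeneous wt (ℓf j) 1)
    (hc : ∀ j ≤ i, IsWeightedHomogeneous wt (cf j) 0)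
    (REG : ∀ r ≤ i, NzdMod (Ideal.span (ℓf '' Set.Iio r)) (ℓf r)) :
    NzdMod (Ideal.span ((fun j => ℓf j - cf j) '' Set.Iio i)) (ℓf i - cf i) := by
  intro u hu
  obtain ⟨v, hv⟩ := (mem_span_image_Iio_iff _ i _).mp hu
  obtain ⟨d, hd⟩ := degLE_exists u
  have hev : ∀ j, ∃ ej, DegLE wt ej (v j) := fun j => degLE_exists (v j)
  refine def_ind ℓf cf i hℓ hc REG d
    (Finset.sup (Finset.range i) (fun j => weightedTotalDegree wt (v j))) u v hd ?_ ?_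
  · intro j hj
    exact DegLE.mono (Finset.le_sup (Finset.mem_range.mpr hj))
      (fun _ he => weightedHomogeneousComponent_eq_zero _ _ he)
  · rw [← hv, mul_comm]

end Deform

section Instantiate

variable {R : Type*} [CommRing R] {m n : ℕ}

/-- Weights: `X`-variables have weight 1, `A`-variables weight 0. -/
def wtmn (m n : ℕ) : (Fin n ⊕ Fin m × Fin n) → ℕ := Sum.elim (fun _ => 1) (fun _ => 0)

lemma lrow_hom (j : Fin m) : IsWeightedHomogeneous (wtmn m n) (lrow (R := R) j) 1 := by
  apply IsWeightedHomogeneous.sum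
  intro l _
  have h1 : IsWeightedHomogeneous (wtmn m n)
      (X (Sum.inr (j, l)) : MvPolynomial (Fin n ⊕ Fin m × Fin n) R) 0 :=
    isWeightedHomogeneous_X _ _ _
  have h2 : IsWeightedHomogeneous (wtmn m n)
      (X (Sum.inl l) : MvPolynomial (Fin n ⊕ Fin m × Fin n) R) 1 :=
    isWeightedHomogeneous_X _ _ _
  simpa using h1.mul h2

lemma rename_inr_hom (q : MvPolynomial (Fin m × Fin n) R) :
    IsWeightedHomogeneous (wtmn m n) (rename Sum.inr q) 0 := by
  induction q using MvPolynomial.induction_on with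
  | C a => rw [rename_C]; exact isWeightedHomogeneous_C _ _
  | add p q hp hq => rw [map_add]; exact hp.add hq
  | mul_X p s hp =>
    rw [map_mul, rename_X]
    have h1 : IsWeightedHomogeneous (wtmn m n)
        (X (Sum.inr s) : MvPolynomial (Fin n ⊕ Fin m × Fin n) R) 0 :=
      isWeightedHomogeneous_X _ _ _
    simpa using hp.mul h1

variable (R m n) in
/-- The `ℕ`-indexed generic linear forms. -/
noncomputable def lN : ℕ → MvPolynomial (Fin n ⊕ Fin m × Fin n) R := fun k =>
  if h : k < m then lrow ⟨k, h⟩ else 0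

variable (R m n) in
/-- The `ℕ`-indexed constants. -/
noncomputable def cN (c : Fin m → MvPolynomial (Fin m × Fin n) R) :
    ℕ → MvPolynomial (Fin n ⊕ Fin m × Fin n) R := fun k =>
  if h : k < m then rename Sum.inr (c ⟨k, h⟩) else 0

lemma lN_lt {k : ℕ} (h : k < m) : lN R m n k = lrow ⟨k, h⟩ := dif_pos h

lemma cN_lt (c : Fin m → MvPolynomial (Fin m × Fin n) R) {k : ℕ} (h : k < m) :
    cN R m n c k = rename Sum.inr (c ⟨k, h⟩) := dif_pos h

lemma lN_image (r : ℕ) (hr : r ≤ m) :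
    lN R m n '' Set.Iio r = (fun j => lrow (R := R) j) '' {j : Fin m | (j : ℕ) < r} := by
  ext y
  constructor
  · rintro ⟨k, hk, rfl⟩
    have hkm : k < m := lt_of_lt_of_le hk hr
    exact ⟨⟨k, hkm⟩, hk, (lN_lt hkm).symm⟩
  · rintro ⟨j, hj, rfl⟩
    exact ⟨(j : ℕ), hj, by rw [lN_lt j.isLt]⟩

lemma REG_N (hmn : m ≤ n) (r : ℕ) (hrm : r < m) :
    NzdMod (Ideal.span (lN R m n '' Set.Iio r)) (lN R m n r) := by
  have hrm' : (⟨r, hrm⟩ : Fin m) ∉ Finset.Iio (⟨r, hrm⟩ : Fin m) := by simp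
  have hcard : (Finset.Iio (⟨r, hrm⟩ : Fin m)).card + (∅ : Finset (Fin n)).card < n := by
    rw [Fin.card_Iio, Finset.card_empty]
    omega
  have hM2 := M2 (R := R) (Finset.Iio (⟨r, hrm⟩ : Fin m)) ∅ hcard _ hrm'
  have hJ : Jdc (R := R) (Finset.Iio (⟨r, hrm⟩ : Fin m)) (∅ : Finset (Fin n))
      = Ideal.span (lN R m n '' Set.Iio r) := by
    have hset : (Set.Iio (⟨r, hrm⟩ : Fin m)) = {j : Fin m | (j : ℕ) < r} := by
      ext j
      simp [Fin.lt_def]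
    rw [Jdc, lN_image r (le_of_lt hrm), Finset.coe_empty, Set.image_empty, Set.union_empty,
      Finset.coe_Iio, hset]
  rw [hJ] at hM2
  rw [lN_lt hrm]
  exact hM2

/-- The main algebraic fact, in the "flat" polynomial ring:
the inhomogeneous generic linear forms form a regular sequence. -/
lemma G_flat (hmn : m ≤ n) (c : Fin m → MvPolynomial (Fin m × Fin n) R) (i : Fin m) :
    NzdMod (Ideal.span ((fun k => lN R m n k - cN R m n c k) '' Set.Iio (i : ℕ)))
      (lN R m n i - cN R m n c i) := by
  apply def_main (wt := wtmn m n)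
  · intro j hj
    have hjm : j < m := lt_of_le_of_lt hj i.isLt
    rw [lN_lt hjm]
    exact lrow_hom _
  · intro j hj
    have hjm : j < m := lt_of_le_of_lt hj i.isLt
    rw [cN_lt c hjm]
    exact rename_inr_hom _
  · intro r hr
    exact REG_N hmn r (lt_of_le_of_lt hr i.isLt)

end Instantiate

section Final

variable {R : Type*} [CommRing R] {m n : ℕ}

lemma Emn_f (c : Fin m → MvPolynomial (Fin m × Fin n) R) (j : Fin m) :
    sumAlgEquiv R (Fin n) (Fin m × Fin n) (lN R m n j - cN R m n c j)
      = (∑ l : Fin n, C (X (j, l)) * X l) - C (c j) := by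
  rw [map_sub, lN_lt j.isLt, cN_lt c j.isLt]
  congr 1
  · rw [lrow, map_sum]
    apply Finset.sum_congr rfl
    intro l _
    rw [map_mul]
    congr 1
    · simp [sumAlgEquiv_X_inr]
    · simp [sumAlgEquiv_X_inl]
  · have h := AlgHom.congr_fun (sumAlgEquiv_comp_rename_inr R (Fin n) (Fin m × Fin n)) (c j)
    simp only [AlgHom.coe_comp, Function.comp_apply, AlgEquiv.toAlgHom_eq_coe,
      AlgHom.coe_coe] at h
    exact h

/-- The key regularity statement, in the polynomial ring `S` itself (no localization
needed). -/
lemma GS (hmn : m ≤ n) (c : Fin m → MvPolynomial (Fin m × Fin n) R) (i : Fin m)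
    (u : MvPolynomial (Fin n) (MvPolynomial (Fin m × Fin n) R))
    (hu : u * ((∑ l : Fin n, C (X (i, l)) * X l) - C (c i)) ∈
      Ideal.span {q | ∃ j : Fin m, j < i ∧ q = (∑ l : Fin n, C (X (j, l)) * X l) - C (c j)}) :
    u ∈ Ideal.span
      {q | ∃ j : Fin m, j < i ∧ q = (∑ l : Fin n, C (X (j, l)) * X l) - C (c j)} := by
  set E := (sumAlgEquiv R (Fin n) (Fin m × Fin n)).toRingEquiv with hE
  have hG := G_flat hmn c i
  have hG2 := (nzdMod_map_iff E _ _).mpr hG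
  have hset : Ideal.map (E : _ →+* _)
      (Ideal.span ((fun k => lN R m n k - cN R m n c k) '' Set.Iio (i : ℕ)))
      = Ideal.span {q | ∃ j : Fin m, j < i ∧ q = (∑ l : Fin n, C (X (j, l)) * X l) - C (c j)} := by
    rw [Ideal.map_span]
    congr 1
    ext q
    constructor
    · rintro ⟨p, ⟨k, hk, rfl⟩, rfl⟩
      have hkm : k < m := lt_trans hk i.isLt
      refine ⟨⟨k, hkm⟩, ?_, ?_⟩
      · exact Fin.lt_def.mpr hk
      · have h := Emn_f c ⟨k, hkm⟩
        rw [← h]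
        rfl
    · rintro ⟨j, hj, rfl⟩
      refine ⟨lN R m n j - cN R m n c j, ⟨(j : ℕ), Fin.lt_def.mp hj, rfl⟩, ?_⟩
      rw [← Emn_f c j]
      rfl
  have hEfi : E (lN R m n i - cN R m n c i)
      = (∑ l : Fin n, C (X (i, l)) * X l) - C (c i) := by
    rw [← Emn_f c i]
    rfl
  rw [hset] at hG2
  have := hG2 u (by rw [hEfi, mul_comm]; exact hu)
  exact this

end Final

end Stmt14Aux

set_option maxHeartbeats 1000000 in
set_option synthInstance.maxHeartbeats 200000 in
open Stmt14Aux in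
/-- Claim 1 in the proof of Proposition `p:regular-seq-inhomog`:
with `R = R₀[{A_{ij}}]`, `S = R[X₁, …, X_n]`, and `L_i = ∑_j A_{ij} X_j − c_i` as in
Statement 13, the images of `L₁, …, L_m` in the localization `S[A₁₁⁻¹]` form a regular
sequence: the image of each `L_i` in `S[A₁₁⁻¹]/(L₁, …, L_{i−1})` is a non-zero-divisor. -/
theorem stmt14 {R₀ : Type*} [CommRing R₀] (m n : ℕ) (hm : 0 < m) (hn : 0 < n)
    (hmn : m ≤ n)
    (c : Fin m → MvPolynomial (Fin m × Fin n) R₀) :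
    ∀ i : Fin m,
      Ideal.Quotient.mk
        (Ideal.span {p : Localization.Away
            ((C (X ((⟨0, hm⟩ : Fin m), (⟨0, hn⟩ : Fin n)))) :
              MvPolynomial (Fin n) (MvPolynomial (Fin m × Fin n) R₀)) |
          ∃ j : Fin m, j < i ∧
            p = algebraMap (MvPolynomial (Fin n) (MvPolynomial (Fin m × Fin n) R₀)) _
              ((∑ l : Fin n, C (X (j, l)) * X l) - C (c j))})
        (algebraMap (MvPolynomial (Fin n) (MvPolynomial (Fin m × Fin n) R₀)) _
          ((∑ l : Fin n, C (X (i, l)) * X l) - C (c i)))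
      ∈ nonZeroDivisors _ := by
  intro i
  classical
  set a : MvPolynomial (Fin n) (MvPolynomial (Fin m × Fin n) R₀) :=
    C (X ((⟨0, hm⟩ : Fin m), (⟨0, hn⟩ : Fin n))) with ha
  set JS : Ideal (MvPolynomial (Fin n) (MvPolynomial (Fin m × Fin n) R₀)) := Ideal.span {q : MvPolynomial (Fin n) (MvPolynomial (Fin m × Fin n) R₀) | ∃ j : Fin m, j < i ∧
      q = (∑ l : Fin n, C (X (j, l)) * X l) - C (c j)} with hJS
  have hTset : {p : Localization.Away a | ∃ j : Fin m, j < i ∧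
      p = algebraMap (MvPolynomial (Fin n) (MvPolynomial (Fin m × Fin n) R₀)) (Localization.Away a) ((∑ l : Fin n, C (X (j, l)) * X l) - C (c j))}
      = (algebraMap (MvPolynomial (Fin n) (MvPolynomial (Fin m × Fin n) R₀)) (Localization.Away a)) '' {q : MvPolynomial (Fin n) (MvPolynomial (Fin m × Fin n) R₀) | ∃ j : Fin m, j < i ∧
          q = (∑ l : Fin n, C (X (j, l)) * X l) - C (c j)} := by
    ext p
    constructor
    · rintro ⟨j, hj, rfl⟩
      exact ⟨_, ⟨j, hj, rfl⟩, rfl⟩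
    · rintro ⟨q, ⟨j, hj, rfl⟩, rfl⟩
      exact ⟨j, hj, rfl⟩
  rw [mem_nonZeroDivisors_iff_right]
  intro z hz
  obtain ⟨x, rfl⟩ := Ideal.Quotient.mk_surjective z
  rw [← map_mul, Ideal.Quotient.eq_zero_iff_mem] at hz
  rw [Ideal.Quotient.eq_zero_iff_mem]
  rw [hTset, ← Ideal.map_span, ← hJS] at hz ⊢
  obtain ⟨⟨u, s⟩, hxu⟩ := IsLocalization.surj (M := Submonoid.powers a)  x
  have h1 : algebraMap (MvPolynomial (Fin n) (MvPolynomial (Fin m × Fin n) R₀)) (Localization.Away a) (u * ((∑ l : Fin n, C (X (i, l)) * X l) - C (c i)))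
      ∈ Ideal.map (algebraMap (MvPolynomial (Fin n) (MvPolynomial (Fin m × Fin n) R₀)) (Localization.Away a)) JS := by
    rw [map_mul, ← hxu]
    have h2 := Ideal.mul_mem_right (algebraMap (MvPolynomial (Fin n) (MvPolynomial (Fin m × Fin n) R₀)) (Localization.Away a) ((s : Submonoid.powers a) : MvPolynomial (Fin n) (MvPolynomial (Fin m × Fin n) R₀))) _ hz
    convert h2 using 1
    ring
  obtain ⟨⟨w0, s2⟩, heq⟩ :=
    (IsLocalization.mem_map_algebraMap_iff (Submonoid.powers a) (Localization.Away a)).mp h1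
  have h3 : algebraMap (MvPolynomial (Fin n) (MvPolynomial (Fin m × Fin n) R₀)) (Localization.Away a)
      (u * ((∑ l : Fin n, C (X (i, l)) * X l) - C (c i)) * (s2 : MvPolynomial (Fin n) (MvPolynomial (Fin m × Fin n) R₀)) - (w0 : MvPolynomial (Fin n) (MvPolynomial (Fin m × Fin n) R₀))) = 0 := by
    rw [map_sub, map_mul, heq, sub_self]
  obtain ⟨s3, hs3⟩ := (IsLocalization.map_eq_zero_iff (Submonoid.powers a) (Localization.Away a) _).mp h3
  have h4 : (((s3 : MvPolynomial (Fin n) (MvPolynomial (Fin m × Fin n) R₀)) * (s2 : MvPolynomial (Fin n) (MvPolynomial (Fin m × Fin n) R₀)) * u) * ((∑ l : Fin n, C (X (i, l)) * X l) - C (c i))) ∈ JS := by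
    have hideq : (((s3 : MvPolynomial (Fin n) (MvPolynomial (Fin m × Fin n) R₀)) * (s2 : MvPolynomial (Fin n) (MvPolynomial (Fin m × Fin n) R₀)) * u) * ((∑ l : Fin n, C (X (i, l)) * X l) - C (c i)))
        = (s3 : MvPolynomial (Fin n) (MvPolynomial (Fin m × Fin n) R₀)) * (w0 : MvPolynomial (Fin n) (MvPolynomial (Fin m × Fin n) R₀)) := by
      linear_combination hs3
    rw [hideq]
    exact Ideal.mul_mem_left _ _ w0.2
  rw [hJS] at h4
  have h5 := GS hmn c i _ h4
  rw [← hJS] at h5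
  have h6 : algebraMap (MvPolynomial (Fin n) (MvPolynomial (Fin m × Fin n) R₀)) (Localization.Away a) ((s3 : MvPolynomial (Fin n) (MvPolynomial (Fin m × Fin n) R₀)) * (s2 : MvPolynomial (Fin n) (MvPolynomial (Fin m × Fin n) R₀)) * u) ∈ Ideal.map (algebraMap (MvPolynomial (Fin n) (MvPolynomial (Fin m × Fin n) R₀)) (Localization.Away a)) JS :=
    Ideal.mem_map_of_mem _ h5
  have h7 : algebraMap (MvPolynomial (Fin n) (MvPolynomial (Fin m × Fin n) R₀)) (Localization.Away a) u ∈ Ideal.map (algebraMap (MvPolynomial (Fin n) (MvPolynomial (Fin m × Fin n) R₀)) (Localization.Away a)) JS := by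
    rw [map_mul, map_mul, mul_assoc] at h6
    exact (Ideal.unit_mul_mem_iff_mem _ (IsLocalization.map_units (Localization.Away a) s2)).mp
      ((Ideal.unit_mul_mem_iff_mem _ (IsLocalization.map_units (Localization.Away a) s3)).mp h6)
  have h8 : x * algebraMap (MvPolynomial (Fin n) (MvPolynomial (Fin m × Fin n) R₀)) (Localization.Away a) ↑s ∈ Ideal.map (algebraMap (MvPolynomial (Fin n) (MvPolynomial (Fin m × Fin n) R₀)) (Localization.Away a)) JS := by
    rw [hxu]; exact h7
  exact (Ideal.mul_unit_mem_iff_mem _ (IsLocalization.map_units (Localization.Away a) s)).mp h8
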